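/- For any prime p ≥ 5 and nonnegative integers k, s, the binomial coefficient C(kp, sp) is congruent to C(k, s) modulo p^3. -/

import Mathlib

open Polynomial Finset

noncomputable def qInt (n : ℕ) : Polynomial ℤ := ∑ i ∈ Finset.range n, X ^ i

noncomputable def qBinom : ℕ → ℕ → Polynomial ℤ
  | _, 0 => 1
  | 0, _ + 1 => 0
  | n + 1, k + 1 => qBinom n k + X ^ (k + 1) * qBinom n (k + 1)

section aux
variable {R : Type*} [CommRing R] {M : Type*} [CommMonoid M] {A : Type*} [AddCommMonoid A]

lemma prod_add_sq_zero (s : Finset ℕ) (m : ℕ → R) (q : R) (hq : q * q = 0) :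
    ∏ i ∈ s, (m i + q) = (∏ i ∈ s, m i) + q * ∑ i ∈ s, ∏ j ∈ s.erase i, m j := by
  classical
  induction s using Finset.induction_on with
  | empty => simp
  | @insert a s ha ih =>
    have hS : ∑ i ∈ insert a s, ∏ j ∈ (insert a s).erase i, m j
        = (∏ j ∈ s, m j) + m a * ∑ i ∈ s, ∏ j ∈ s.erase i, m j := by
      rw [Finset.sum_insert ha, Finset.erase_insert ha, Finset.mul_sum]
      congr 1
      refine Finset.sum_congr rfl fun i hi => ?_
      rw [Finset.erase_insert_of_ne ((ne_of_mem_of_not_mem hi ha).symm), Finset.prod_insert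
        (fun h => ha (Finset.mem_of_mem_erase h))]
    rw [Finset.prod_insert ha, Finset.prod_insert ha, hS, ih]
    ring_nf
    linear_combination (∑ i ∈ s, ∏ j ∈ s.erase i, m j) * hq

lemma prod_range_two_mul (h : ℕ) (g : ℕ → M) :
    ∏ i ∈ range (2 * h), g i = ∏ i ∈ range h, (g i * g (2 * h - 1 - i)) := by
  rw [two_mul, Finset.prod_range_add, ← Finset.prod_range_reflect (fun i => g (h + i)) h,
    ← Finset.prod_mul_distrib]
  refine Finset.prod_congr rfl fun i hi => ?_
  rw [Finset.mem_range] at hi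
  congr 2
  omega

lemma sum_range_two_mul (h : ℕ) (g : ℕ → A) :
    ∑ i ∈ range (2 * h), g i = ∑ i ∈ range h, (g i + g (2 * h - 1 - i)) := by
  rw [two_mul, Finset.sum_range_add, ← Finset.sum_range_reflect (fun i => g (h + i)) h,
    ← Finset.sum_add_distrib]
  refine Finset.sum_congr rfl fun i hi => ?_
  rw [Finset.mem_range] at hi
  congr 2
  omega

end aux

section modp
variable {p : ℕ}

lemma sum_univ_inv_sq_zero [NeZero p] (hp : p.Prime) (hp5 : 5 ≤ p) :
    ∑ x : ZMod p, (x⁻¹) ^ 2 = 0 := by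
  haveI : Fact p.Prime := ⟨hp⟩
  have hcard : 2 < Fintype.card (ZMod p) - 1 := by rw [ZMod.card]; omega
  have hinv : Function.Bijective (fun x : ZMod p => x⁻¹) :=
    Function.Involutive.bijective (fun x => inv_inv x)
  have := Fintype.sum_bijective (fun x : ZMod p => x⁻¹) hinv
    (fun x : ZMod p => x ^ 2) (fun x : ZMod p => (x⁻¹) ^ 2) (fun x => by simp)
  rw [← this]
  exact FiniteField.sum_pow_lt_card_sub_one (K := ZMod p) 2 hcard

lemma sum_range_p_inv_sq_zero [NeZero p] (hp : p.Prime) (hp5 : 5 ≤ p) :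
    ∑ i ∈ Finset.range p, (((i : ZMod p))⁻¹) ^ 2 = 0 := by
  haveI : Fact p.Prime := ⟨hp⟩
  rw [← sum_univ_inv_sq_zero hp hp5]
  refine Finset.sum_nbij' (fun i => (i : ZMod p)) (fun x => x.val) ?_ ?_ ?_ ?_ ?_
  · intro a _; exact Finset.mem_univ _
  · intro x _; exact Finset.mem_range.2 (ZMod.val_lt x)
  · intro a ha; exact ZMod.val_cast_of_lt (Finset.mem_range.1 ha)
  · intro x _; simp [ZMod.natCast_val, ZMod.cast_id]
  · intro a _; rfl

end modp

lemma sum_half_inv_sq_zero [NeZero p] (hp : p.Prime) (hp5 : 5 ≤ p) {h : ℕ}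
    (hh : 2 * h + 1 = p) :
    ∑ i ∈ Finset.range h, (((i + 1 : ℕ) : ZMod p)⁻¹) ^ 2 = 0 := by
  haveI : Fact p.Prime := ⟨hp⟩
  set f : ℕ → ZMod p := fun i => (((i + 1 : ℕ) : ZMod p)⁻¹) ^ 2 with hf
  have hpair : ∀ i ∈ Finset.range h, f i + f (2 * h - 1 - i) = f i + f i := by
    intro i hi
    rw [Finset.mem_range] at hi
    have e1 : 2 * h - 1 - i + 1 = p - (i + 1) := by omega
    have e2 : ((p - (i + 1) : ℕ) : ZMod p) = -(((i + 1 : ℕ) : ZMod p)) := by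
      rw [Nat.cast_sub (by omega)]
      simp [ZMod.natCast_self]
    congr 1
    rw [hf]
    simp only [e1, e2, inv_neg]
    ring
  have hdouble : ∑ i ∈ Finset.range (2 * h), f i
      = (∑ i ∈ Finset.range h, f i) + ∑ i ∈ Finset.range h, f i := by
    rw [sum_range_two_mul h f, Finset.sum_congr rfl hpair, Finset.sum_add_distrib]
  have hfull : ∑ i ∈ Finset.range (2 * h), f i = 0 := by
    have := sum_range_p_inv_sq_zero (p := p) hp hp5
    rw [show Finset.range p = Finset.range (2 * h + 1) by rw [← hh],
      Finset.sum_range_succ'] at this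
    simp only [Nat.cast_zero, ZMod.inv_zero, inv_zero, zero_pow, add_zero, OfNat.ofNat_ne_zero,
      ne_eq, not_false_eq_true] at this
    rw [hf]
    simpa [← inv_pow] using this
  have h2 : (2 : ZMod p) ≠ 0 := by
    intro hc
    have : ((2 : ℕ) : ZMod p) = 0 := by exact_mod_cast hc
    rw [ZMod.natCast_eq_zero_iff] at this
    exact absurd (Nat.le_of_dvd (by norm_num) this) (by omega)
  have : (2 : ZMod p) * (∑ i ∈ Finset.range h, f i) = 0 := by
    rw [two_mul, ← hdouble, hfull]
  rcases mul_eq_zero.mp this with hc | hc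
  · exact absurd hc h2
  · exact hc

lemma half_sum_dvd (hp : p.Prime) (hp5 : 5 ≤ p) {h : ℕ} (hh : 2 * h + 1 = p) :
    p ∣ ∑ i ∈ Finset.range h, ∏ j ∈ (Finset.range h).erase i, ((j + 1) * (p - 1 - j)) := by
  haveI : Fact p.Prime := ⟨hp⟩
  haveI : NeZero p := ⟨hp.ne_zero⟩
  rw [← ZMod.natCast_eq_zero_iff]
  push_cast
  set G : ℕ → ZMod p := fun j => -(((j + 1 : ℕ) : ZMod p)) ^ 2 with hGdef
  have hcast : ∀ i ∈ Finset.range h, ∏ j ∈ (Finset.range h).erase i,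
      (((j : ZMod p) + 1) * ((p - 1 - j : ℕ) : ZMod p)) = ∏ j ∈ (Finset.range h).erase i, G j := by
    intro i hi
    refine Finset.prod_congr rfl fun j hj => ?_
    have hjr : j < h := Finset.mem_range.1 (Finset.mem_of_mem_erase hj)
    have e1 : p - 1 - j = p - (j + 1) := by omega
    have e2 : ((p - (j + 1) : ℕ) : ZMod p) = -(((j + 1 : ℕ) : ZMod p)) := by
      rw [Nat.cast_sub (by omega)]
      simp [ZMod.natCast_self]
    rw [e1, e2, hGdef]
    push_cast
    ring
  rw [Finset.sum_congr rfl hcast]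
  have hGne : ∀ i ∈ Finset.range h, G i ≠ 0 := by
    intro i hi
    rw [Finset.mem_range] at hi
    have hne : ((i + 1 : ℕ) : ZMod p) ≠ 0 := by
      rw [Ne, ZMod.natCast_eq_zero_iff]
      intro hc
      exact absurd (Nat.le_of_dvd (by omega) hc) (by omega)
    exact neg_ne_zero.mpr (pow_ne_zero 2 hne)
  have hGinv : ∀ i ∈ Finset.range h, G i ≠ 0 → True := fun _ _ _ => trivial
  have hprod : ∀ i ∈ Finset.range h, ∏ j ∈ (Finset.range h).erase i, G j
      = (∏ j ∈ Finset.range h, G j) * (G i)⁻¹ := by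
    intro i hi
    rw [← Finset.prod_erase_mul _ _ hi, mul_assoc, mul_inv_cancel₀ (hGne i hi), mul_one]
  rw [Finset.sum_congr rfl hprod, ← Finset.mul_sum]
  have hsum : ∑ i ∈ Finset.range h, (G i)⁻¹ = 0 := by
    have : ∀ i ∈ Finset.range h, (G i)⁻¹ = -((((i + 1 : ℕ) : ZMod p))⁻¹) ^ 2 := by
      intro i hi
      rw [hGdef]
      simp [inv_neg, inv_pow]
    rw [Finset.sum_congr rfl this, Finset.sum_neg_distrib]
    rw [sum_half_inv_sq_zero hp hp5 hh, neg_zero]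
  rw [hsum, mul_zero]

lemma block_congr (hp : p.Prime) (hp5 : 5 ≤ p) (j : ℕ) :
    ((∏ i ∈ Finset.range (p - 1), (j * p + i + 1) : ℕ) : ZMod (p ^ 3))
      = ((Nat.factorial (p - 1) : ℕ) : ZMod (p ^ 3)) := by
  have hodd : p % 2 = 1 := Nat.odd_iff.mp (hp.odd_of_ne_two (by omega))
  set h : ℕ := (p - 1) / 2 with hhdef
  have hh : 2 * h + 1 = p := by omega
  have hp3 : ((p : ZMod (p ^ 3))) ^ 3 = 0 := by
    rw [← Nat.cast_pow, ZMod.natCast_self]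
  set q : ZMod (p ^ 3) := (p : ZMod (p ^ 3)) ^ 2 * ((j : ZMod (p ^ 3)) ^ 2 + (j : ZMod (p ^ 3)))
    with hq
  have hq2 : q * q = 0 := by
    rw [hq]
    linear_combination ((p : ZMod (p ^ 3)) * ((j : ZMod (p ^ 3)) ^ 2 + (j : ZMod (p ^ 3))) ^ 2)
      * hp3
  set M : ℕ → ZMod (p ^ 3) := fun i => ((i + 1 : ℕ) : ZMod (p ^ 3)) * ((p - 1 - i : ℕ) :
    ZMod (p ^ 3)) with hM
  have step12 : ((∏ i ∈ Finset.range (p - 1), (j * p + i + 1) : ℕ) : ZMod (p ^ 3))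
      = ∏ i ∈ Finset.range h, (M i + q) := by
    rw [show p - 1 = 2 * h by omega, prod_range_two_mul, Nat.cast_prod]
    refine Finset.prod_congr rfl fun i hi => ?_
    rw [Finset.mem_range] at hi
    have e1 : j * p + (2 * h - 1 - i) + 1 = j * p + (p - 1 - i) := by omega
    have e2 : ((p - 1 - i : ℕ) : ZMod (p ^ 3))
        = (p : ZMod (p ^ 3)) - 1 - (i : ZMod (p ^ 3)) := by
      rw [Nat.cast_sub (by omega : i ≤ p - 1), Nat.cast_sub (by omega : 1 ≤ p)]
      push_cast
      ring
    rw [e1, hM, hq]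
    push_cast [e2]
    ring
  have hprodM : ∏ i ∈ Finset.range h, M i = ((Nat.factorial (p - 1) : ℕ) : ZMod (p ^ 3)) := by
    have hnat : ∏ i ∈ Finset.range h, ((i + 1) * (p - 1 - i)) = Nat.factorial (p - 1) := by
      rw [← Finset.prod_range_add_one_eq_factorial, show p - 1 = 2 * h by omega,
        prod_range_two_mul]
      refine Finset.prod_congr rfl fun i hi => ?_
      rw [Finset.mem_range] at hi
      congr 1
      omega
    rw [← hnat, Nat.cast_prod]
    exact Finset.prod_congr rfl fun i _ => by rw [hM, Nat.cast_mul]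
  have hsum : q * (∑ i ∈ Finset.range h, ∏ j' ∈ (Finset.range h).erase i, M j') = 0 := by
    obtain ⟨E', hE'⟩ := half_sum_dvd hp hp5 hh
    have hsumcast : ∑ i ∈ Finset.range h, ∏ j' ∈ (Finset.range h).erase i, M j'
        = ((∑ i ∈ Finset.range h, ∏ j' ∈ (Finset.range h).erase i,
            ((j' + 1) * (p - 1 - j')) : ℕ) : ZMod (p ^ 3)) := by
      rw [Nat.cast_sum]
      refine Finset.sum_congr rfl fun i _ => ?_
      rw [Nat.cast_prod]
      exact Finset.prod_congr rfl fun j' _ => by rw [hM, Nat.cast_mul]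
    rw [hsumcast, hE', hq]
    push_cast
    linear_combination (((j : ZMod (p ^ 3)) ^ 2 + (j : ZMod (p ^ 3))) * (E' : ZMod (p ^ 3)))
      * hp3
  rw [step12, prod_add_sq_zero _ M q hq2, hsum, add_zero, hprodM]

lemma factorial_add_prod (a b : ℕ) :
    Nat.factorial (a + b) = Nat.factorial a * ∏ i ∈ Finset.range b, (a + i + 1) := by
  induction b with
  | zero => simp
  | succ n ih =>
    rw [Finset.prod_range_succ, ← Nat.add_assoc, Nat.factorial_succ, ih]
    ring

lemma fact_decomp (hp : p.Prime) (m : ℕ) :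
    Nat.factorial (m * p) = p ^ m * Nat.factorial m *
      ∏ j ∈ Finset.range m, (∏ i ∈ Finset.range (p - 1), (j * p + i + 1)) := by
  induction m with
  | zero => simp
  | succ n ih =>
    have hp1 : 1 ≤ p := hp.one_lt.le.trans' (by norm_num)
    have h1 : (n + 1) * p = n * p + p := by ring
    rw [h1, factorial_add_prod, ih,
      show Finset.range p = Finset.range ((p - 1) + 1) by congr 1; omega,
      Finset.prod_range_succ, Finset.prod_range_succ, Nat.factorial_succ]
    have h2 : n * p + (p - 1) + 1 = p * (n + 1) := by
      have := hp.pos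
      ring_nf
      omega
    rw [h2]
    ring


theorem ljunggren_congruence (p : ℕ) (hp : p.Prime) (hp5 : 5 ≤ p) (k s : ℕ) :
    ((k * p).choose (s * p) : ℤ) ≡ (k.choose s : ℕ) [ZMOD ((p : ℤ) ^ 3)] := by
  rcases le_or_gt s k with hsk | hks
  · -- main case
    set A : ℕ → ℕ := fun m => ∏ j ∈ Finset.range m,
      (∏ i ∈ Finset.range (p - 1), (j * p + i + 1)) with hA
    have h1 : (k * p).choose (s * p) * Nat.factorial (s * p) * Nat.factorial (k * p - s * p)
        = Nat.factorial (k * p) :=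
      Nat.choose_mul_factorial_mul_factorial (Nat.mul_le_mul_right p hsk)
    rw [show k * p - s * p = (k - s) * p from (Nat.sub_mul k s p).symm ▸ rfl] at h1
    rw [fact_decomp hp s, fact_decomp hp (k - s), fact_decomp hp k] at h1
    have hk : Nat.factorial k = k.choose s * (Nat.factorial s * Nat.factorial (k - s)) := by
      rw [← Nat.choose_mul_factorial_mul_factorial hsk]; ring
    have hpk : p ^ s * p ^ (k - s) = p ^ k := by rw [← pow_add]; congr 1; omega
    have key : p ^ k * (Nat.factorial s * Nat.factorial (k - s)) *
        ((k * p).choose (s * p) * (A s * A (k - s)))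
        = p ^ k * (Nat.factorial s * Nat.factorial (k - s)) * (k.choose s * A k) := by
      calc p ^ k * (Nat.factorial s * Nat.factorial (k - s)) *
            ((k * p).choose (s * p) * (A s * A (k - s)))
          = (k * p).choose (s * p) * (p ^ s * Nat.factorial s * A s) *
            (p ^ (k - s) * Nat.factorial (k - s) * A (k - s)) := by rw [← hpk]; ring
        _ = p ^ k * Nat.factorial k * A k := h1
        _ = _ := by rw [hk]; ring
    have hpos : 0 < p ^ k * (Nat.factorial s * Nat.factorial (k - s)) :=
      Nat.mul_pos (Nat.pow_pos hp.pos)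
        (Nat.mul_pos (Nat.factorial_pos s) (Nat.factorial_pos (k - s)))
    have key2 : (k * p).choose (s * p) * (A s * A (k - s)) = k.choose s * A k :=
      Nat.eq_of_mul_eq_mul_left hpos key
    -- cast to ZMod (p^3)
    set W : ZMod (p ^ 3) := ((Nat.factorial (p - 1) : ℕ) : ZMod (p ^ 3)) with hW
    have hAc : ∀ m : ℕ, ((A m : ℕ) : ZMod (p ^ 3)) = W ^ m := by
      intro m
      rw [hA]
      rw [Nat.cast_prod]
      rw [Finset.prod_congr rfl fun j _ => block_congr hp hp5 j]
      rw [Finset.prod_const, Finset.card_range]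
    have hcast := congrArg (fun n : ℕ => (n : ZMod (p ^ 3))) key2
    simp only [Nat.cast_mul, hAc] at hcast
    have hWk : W ^ s * W ^ (k - s) = W ^ k := by rw [← pow_add]; congr 1; omega
    rw [hWk] at hcast
    have hWunit : IsUnit (W ^ k) := by
      refine IsUnit.pow k ?_
      rw [hW, ZMod.isUnit_iff_coprime]
      refine Nat.Coprime.pow_right 3 ?_
      have : ¬ p ∣ Nat.factorial (p - 1) := fun hd =>
        absurd ((Nat.Prime.dvd_factorial hp).mp hd) (by omega)
      exact ((Nat.Prime.coprime_iff_not_dvd hp).mpr this).symm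
    have hfinal : (((k * p).choose (s * p) : ℕ) : ZMod (p ^ 3))
        = ((k.choose s : ℕ) : ZMod (p ^ 3)) := hWunit.mul_left_injective hcast
    have hint : (((k * p).choose (s * p) : ℤ) : ZMod (p ^ 3))
        = (((k.choose s : ℕ) : ℤ) : ZMod (p ^ 3)) := by push_cast at hfinal ⊢; exact hfinal
    have hmod := (ZMod.intCast_eq_intCast_iff _ _ _).mp hint
    have : ((p ^ 3 : ℕ) : ℤ) = (p : ℤ) ^ 3 := by push_cast; ring
    rwa [this] at hmod
  · have h0 : (k * p).choose (s * p) = 0 :=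
      Nat.choose_eq_zero_of_lt ((Nat.mul_lt_mul_right hp.pos).mpr hks)
    have h0' : k.choose s = 0 := Nat.choose_eq_zero_of_lt hks
    rw [h0, h0']
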